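/- Let (X, λ) be a convergence approach space and define cl A := C(θ_A) (the closure function of A). Then: (1) cl ∅ = θ_∅ (constant 0); (2) A ⊆ B implies cl A ≤ cl B; (3) cl(A ∪ B) = cl A ∨ cl B (pointwise sup); (4) cl({x : cl A(x) = 1}) = cl A. -/
import Mathlib


open Filter Set
open scoped ENNReal

noncomputable section
attribute [local instance] Classical.propDecidable

instance : Fact ((0:ℝ) ≤ 1) := ⟨zero_le_one⟩

/-- The value quantale `V = [0,1]` with multiplication. -/
abbrev V := unitInterval

/-- Residuation `t ⊘ x` on `[0,1]`: `min (t/x) 1` if `x ≠ 0`, and `1` if `x = 0`. -/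
def oslash (t x : V) : V :=
  if x = 0 then 1
  else ⟨min (t.1 / x.1) 1, ⟨le_min (div_nonneg t.2.1 x.2.1) zero_le_one, min_le_right _ _⟩⟩

/-- The grill of a filter: sets meeting every member of the filter. -/
def grill {X : Type*} (F : Filter X) : Set (Set X) := {B | ∀ S ∈ F, (B ∩ S).Nonempty}

/-- `limsup` of a `V`-valued function along a family of sets. -/
def limsupF {X : Type*} (F : Set (Set X)) (f : X → V) : V := ⨅ s ∈ F, ⨆ t ∈ s, f t

/-- `liminf` of a `V`-valued function along a family of sets. -/
def liminfF {X : Type*} (F : Set (Set X)) (f : X → V) : V := ⨆ s ∈ F, ⨅ t ∈ s, f t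

/-- A convergence approach space structure on `X`, valued in `V = [0,1]`:
`lam F x` measures how well `F` converges to `x` (1 = full convergence);
finer filters converge better, and principal ultrafilters fully converge. -/
structure CAS (X : Type*) where
  lam : Filter X → X → V
  mono : ∀ ⦃F G : Filter X⦄, F ≤ G → lam G ≤ lam F
  centered : ∀ x : X, lam (pure x) x = 1

/-- The standard approach structure on `V`. -/
def lamV (F : Filter V) (v : V) : V := oslash v (⨆ A ∈ grill F, sInf A)

/-- `f : X → V` is a contraction into `(V, λ_V)` (characterized pointwise). -/
def Contr {X : Type*} (Λ : CAS X) (f : X → V) : Prop :=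
  ∀ (F : Filter X) (x : X), Λ.lam F x ≤ oslash (f x) (limsupF F.sets f)

/-- Indicator function of a set, valued in `V`. -/
def theta {X : Type*} (A : Set X) : X → V := fun x => if x ∈ A then 1 else 0

/-- The lower-hull operator: the smallest contraction above `f`. -/
def Cop {X : Type*} (Λ : CAS X) (f : X → V) : X → V :=
  sInf {g : X → V | Contr Λ g ∧ f ≤ g}

/-- The adherence function of a set `A`. -/
def adhSet {X : Type*} (Λ : CAS X) (A : Set X) : X → V :=
  fun x => ⨆ (U : Ultrafilter X) (_ : A ∈ U), Λ.lam U x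

/-- The adherence function of a filter. -/
def adhFilter {X : Type*} (Λ : CAS X) (F : Filter X) : X → V :=
  fun x => ⨆ (U : Ultrafilter X) (_ : (U : Filter X) ≤ F), Λ.lam U x

/-- Adherence in `(V, λ_V)` of a subset of `V`. -/
def adhV (A : Set V) (v : V) : V := ⨆ (U : Ultrafilter V) (_ : A ∈ U), lamV U v

/-! ### Auxiliary lemmas -/

lemma V_le_one (v : V) : v ≤ (1 : V) := Subtype.coe_le_coe.mp v.2.2

lemma le_oslash {z t x : V} : z ≤ oslash t x ↔ z.1 * x.1 ≤ t.1 := by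
  unfold oslash
  split_ifs with h
  · subst h
    refine iff_of_true (V_le_one z) ?_
    show z.1 * (0:ℝ) ≤ t.1
    simpa using t.2.1
  · have hx : (0:ℝ) < x.1 := lt_of_le_of_ne x.2.1 (fun he => h (Subtype.ext he.symm))
    rw [← Subtype.coe_le_coe]
    simp only [le_min_iff]
    constructor
    · rintro ⟨h1, -⟩
      exact (le_div_iff₀ hx).mp h1
    · intro hm
      exact ⟨(le_div_iff₀ hx).mpr hm, z.2.2⟩

lemma oslash_mul_le (t x : V) : (oslash t x).1 * x.1 ≤ t.1 := le_oslash.mp le_rfl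

lemma oslash_mono_left {t t' : V} (x : V) (h : t ≤ t') : oslash t x ≤ oslash t' x :=
  le_oslash.mpr ((oslash_mul_le t x).trans h)

lemma oslash_anti_right (t : V) {x x' : V} (h : x ≤ x') : oslash t x' ≤ oslash t x := by
  refine le_oslash.mpr (le_trans ?_ (oslash_mul_le t x'))
  exact mul_le_mul_of_nonneg_left h (oslash t x').2.1

lemma iInf_oslash {ι : Sort*} (f : ι → V) (D : V) :
    (⨅ i, oslash (f i) D) ≤ oslash (⨅ i, f i) D := by
  rw [le_oslash]
  have hy : (⨅ i, oslash (f i) D).1 * D.1 ∈ unitInterval :=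
    unitInterval.mul_mem (⨅ i, oslash (f i) D).2 D.2
  have : (⟨_, hy⟩ : V) ≤ ⨅ i, f i := by
    refine le_iInf fun i => ?_
    exact le_oslash.mp (iInf_le (fun i => oslash (f i) D) i)
  exact this

lemma limsupF_mono {X : Type*} (S : Set (Set X)) {f g : X → V} (h : f ≤ g) :
    limsupF S f ≤ limsupF S g := by
  unfold limsupF
  exact iInf₂_mono fun s _ => iSup₂_mono fun t _ => h t

/-- key distributivity in the complete linear order `V` -/
lemma biInf_sup_le {ι : Sort*} (p : ι → Prop) (f : ι → V) (a : V) :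
    (⨅ i, ⨅ _ : p i, (a ⊔ f i)) ≤ a ⊔ ⨅ i, ⨅ _ : p i, f i := by
  rcases le_or_gt (⨅ i, ⨅ _ : p i, (a ⊔ f i)) a with h | h
  · exact h.trans le_sup_left
  · refine le_trans ?_ le_sup_right
    refine le_iInf fun i => le_iInf fun hi => ?_
    have h1 : a < a ⊔ f i := h.trans_le (iInf₂_le i hi)
    have h2 : a ≤ f i := (lt_sup_iff.mp h1).resolve_left (lt_irrefl a) |>.le
    exact (iInf₂_le i hi).trans (sup_le h2 le_rfl)

lemma limsupF_sup_le {X : Type*} (F : Filter X) (f g : X → V) :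
    limsupF F.sets (f ⊔ g) ≤ limsupF F.sets f ⊔ limsupF F.sets g := by
  unfold limsupF
  have step1 : (⨅ s ∈ F.sets, ⨆ t ∈ s, (f ⊔ g) t) ≤
      ⨅ s1 ∈ F.sets, ⨅ s2 ∈ F.sets, ((⨆ t ∈ s1, f t) ⊔ (⨆ t ∈ s2, g t)) := by
    refine le_iInf₂ fun s1 h1 => le_iInf₂ fun s2 h2 => ?_
    refine le_trans (iInf₂_le (s1 ∩ s2) (F.inter_sets h1 h2)) ?_
    refine iSup₂_le fun t ht => ?_
    exact sup_le_sup (le_iSup₂ (f := fun t _ => f t) t ht.1)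
      (le_iSup₂ (f := fun t _ => g t) t ht.2)
  refine step1.trans ?_
  have step2 : (⨅ s1 ∈ F.sets, ⨅ s2 ∈ F.sets, ((⨆ t ∈ s1, f t) ⊔ (⨆ t ∈ s2, g t))) ≤
      ⨅ s1 ∈ F.sets, ((⨆ t ∈ s1, f t) ⊔ ⨅ s2 ∈ F.sets, ⨆ t ∈ s2, g t) :=
    iInf₂_mono fun s1 _ => biInf_sup_le _ _ _
  refine step2.trans ?_
  have step3 : (⨅ s1 ∈ F.sets, ((⨆ t ∈ s1, f t) ⊔ ⨅ s2 ∈ F.sets, ⨆ t ∈ s2, g t)) =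
      ⨅ s1 ∈ F.sets, ((⨅ s2 ∈ F.sets, ⨆ t ∈ s2, g t) ⊔ ⨆ t ∈ s1, f t) := by
    simp only [sup_comm]
  rw [step3, sup_comm]
  exact biInf_sup_le _ _ _

lemma Contr.sup {X : Type*} {Λ : CAS X} {f g : X → V} (hf : Contr Λ f) (hg : Contr Λ g) :
    Contr Λ (f ⊔ g) := by
  intro F x
  have hls := limsupF_sup_le F f g
  rcases le_total (limsupF F.sets f) (limsupF F.sets g) with h | h
  · have h1 : limsupF F.sets (f ⊔ g) ≤ limsupF F.sets g :=
      hls.trans (sup_le h le_rfl)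
    refine (hg F x).trans ?_
    refine le_trans (oslash_mono_left _ (le_sup_right : g x ≤ (f ⊔ g) x)) ?_
    exact oslash_anti_right _ h1
  · have h1 : limsupF F.sets (f ⊔ g) ≤ limsupF F.sets f :=
      hls.trans (sup_le le_rfl h)
    refine (hf F x).trans ?_
    refine le_trans (oslash_mono_left _ (le_sup_left : f x ≤ (f ⊔ g) x)) ?_
    exact oslash_anti_right _ h1

lemma le_Cop {X : Type*} (Λ : CAS X) (f : X → V) : f ≤ Cop Λ f :=
  le_sInf fun _ hg => hg.2

lemma Contr.cop {X : Type*} (Λ : CAS X) (f : X → V) : Contr Λ (Cop Λ f) := by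
  intro F x
  set S := {g : X → V | Contr Λ g ∧ f ≤ g} with hS
  set D := limsupF F.sets (Cop Λ f) with hD
  have key : Λ.lam F x ≤ ⨅ g : S, oslash ((g : X → V) x) D := by
    refine le_iInf fun g => ?_
    have h1 : Λ.lam F x ≤ oslash ((g : X → V) x) (limsupF F.sets g) := g.2.1 F x
    refine h1.trans (oslash_anti_right _ ?_)
    exact limsupF_mono _ (sInf_le g.2)
  refine key.trans ?_
  have h2 : (⨅ g : S, oslash ((g : X → V) x) D) ≤ oslash (⨅ g : S, (g : X → V) x) D :=
    iInf_oslash _ _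
  rw [show (Cop Λ f) x = ⨅ g : S, (g : X → V) x from sInf_apply]
  exact h2

lemma Cop_le {X : Type*} {Λ : CAS X} {f g : X → V} (hg : Contr Λ g) (hfg : f ≤ g) :
    Cop Λ f ≤ g := sInf_le ⟨hg, hfg⟩

lemma Cop_mono {X : Type*} (Λ : CAS X) {f g : X → V} (h : f ≤ g) : Cop Λ f ≤ Cop Λ g :=
  Cop_le (Contr.cop Λ g) (h.trans (le_Cop Λ g))

lemma V_zero_le (v : V) : (0 : V) ≤ v := Subtype.coe_le_coe.mp v.2.1

lemma theta_mono {X : Type*} {A B : Set X} (hAB : A ⊆ B) : theta A ≤ theta B := by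
  intro x
  by_cases hx : x ∈ A
  · simp [theta, hx, hAB hx]
  · simp only [theta, if_neg hx]
    exact V_zero_le _

/-- the closure function `cl A := C(θ_A)` satisfies:
(1) `cl ∅ = θ_∅`; (2) `A ⊆ B → cl A ≤ cl B`; (3) `cl (A ∪ B) = cl A ∨ cl B`;
(4) `cl {x : cl A x = 1} = cl A`. -/
theorem stmt18 {X : Type*} (Λ : CAS X) :
    Cop Λ (theta (∅ : Set X)) = theta (∅ : Set X) ∧
    (∀ A B : Set X, A ⊆ B → Cop Λ (theta A) ≤ Cop Λ (theta B)) ∧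
    (∀ A B : Set X, Cop Λ (theta (A ∪ B)) = Cop Λ (theta A) ⊔ Cop Λ (theta B)) ∧
    (∀ A : Set X, Cop Λ (theta {x : X | Cop Λ (theta A) x = 1}) = Cop Λ (theta A)) := by
  have contr0 : Contr Λ (theta (∅ : Set X)) := by
    intro F x
    have hz : ∀ y, theta (∅ : Set X) y = 0 := fun y => by simp [theta]
    have hl : limsupF F.sets (theta (∅ : Set X)) = 0 := by
      refine le_antisymm ?_ (V_zero_le _)
      refine le_trans (iInf₂_le Set.univ F.univ_sets) ?_
      exact iSup₂_le fun t _ => (hz t).le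
    rw [hz x, hl]
    have h1 : oslash 0 0 = 1 := by simp [oslash]
    rw [h1]
    exact V_le_one _
  refine ⟨le_antisymm (Cop_le contr0 le_rfl) (le_Cop _ _), ?_, ?_, ?_⟩
  · intro A B hAB
    exact Cop_mono Λ (theta_mono hAB)
  · intro A B
    refine le_antisymm ?_ ?_
    · refine Cop_le ((Contr.cop Λ (theta A)).sup (Contr.cop Λ (theta B))) ?_
      have h1 : theta (A ∪ B) ≤ theta A ⊔ theta B := by
        intro x
        by_cases hx : x ∈ A
        · exact le_trans (le_of_eq (by simp [theta, hx])) le_sup_left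
        · by_cases hx' : x ∈ B
          · exact le_trans (le_of_eq (by simp [theta, hx'])) le_sup_right
          · simp only [theta, Set.mem_union, if_neg (by tauto : ¬ (x ∈ A ∨ x ∈ B))]
            exact V_zero_le _
      exact h1.trans (sup_le_sup (le_Cop Λ (theta A)) (le_Cop Λ (theta B)))
    · exact sup_le (Cop_mono Λ (theta_mono Set.subset_union_left))
        (Cop_mono Λ (theta_mono Set.subset_union_right))
  · intro A
    refine le_antisymm ?_ ?_
    · refine Cop_le (Contr.cop Λ (theta A)) ?_
      intro x
      by_cases hx : Cop Λ (theta A) x = 1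
      · exact le_of_eq (by simp [theta, hx, Set.mem_setOf_eq])
      · simp only [theta, Set.mem_setOf_eq, if_neg hx]
        exact V_zero_le _
    · refine Cop_mono Λ (theta_mono ?_)
      intro x hxA
      have h1 : (1 : V) ≤ Cop Λ (theta A) x := by
        have := le_Cop Λ (theta A) x
        rwa [show theta A x = 1 from by simp [theta, hxA]] at this
      exact le_antisymm (V_le_one _) h1
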